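/- The coefficients τ^M_L := ∑_{I ⊆ L} (−1)^{|I|+1} θ((M∖L) ∪ I) satisfy the consistency relation τ^M_L = τ^{M∪{t}}_L + τ^{M∪{t}}_{L∪{t}} for every nonempty finite M ⊆ T, nonempty L ⊆ M, and t ∈ T ∖ M. -/
import Mathlib


/-- `τ^M_L = ∑_{I ⊆ L} (−1)^{|I|+1} θ((M∖L) ∪ I)`. -/
def tauCoeff {T : Type*} [DecidableEq T] (θ : Finset T → ℝ) (M L : Finset T) : ℝ :=
  ∑ I ∈ L.powerset, (-1 : ℝ) ^ (I.card + 1) * θ ((M \ L) ∪ I)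

/-- Consistency relation: `τ^M_L = τ^{M∪{t}}_L + τ^{M∪{t}}_{L∪{t}}` for every nonempty finite
`M ⊆ T`, nonempty `L ⊆ M` and `t ∈ T ∖ M`. -/
theorem tauCoeff_consistency {T : Type*} [DecidableEq T] (θ : Finset T → ℝ)
    (M L : Finset T) (hM : M.Nonempty) (hL : L.Nonempty) (hLM : L ⊆ M)
    (t : T) (ht : t ∉ M) :
    tauCoeff θ M L = tauCoeff θ (insert t M) L + tauCoeff θ (insert t M) (insert t L) := by
  have htL : t ∉ L := fun h => ht (hLM h)
  have h1 : (insert t M) \ (insert t L) = M \ L := by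
    ext x; simp only [Finset.mem_sdiff, Finset.mem_insert]
    constructor
    · rintro ⟨hx | hx, hn⟩
      · exact absurd (Or.inl hx) hn
      · exact ⟨hx, fun h => hn (Or.inr h)⟩
    · rintro ⟨hx, hn⟩
      exact ⟨Or.inr hx, fun h => h.elim (fun he => ht (he ▸ hx)) hn⟩
  have h2 : (insert t M) \ L = insert t (M \ L) := by
    rw [Finset.insert_sdiff_of_notMem _ htL]
  unfold tauCoeff
  rw [h1, h2, Finset.sum_powerset_insert htL]
  have key : ∀ I ∈ L.powerset,
      (-1 : ℝ) ^ (I.card + 1) * θ (insert t (M \ L) ∪ I)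
      + (-1 : ℝ) ^ ((insert t I).card + 1) * θ (M \ L ∪ insert t I) = 0 := by
    intro I hI
    have htI : t ∉ I := fun h => htL (Finset.mem_powerset.mp hI h)
    have hset : insert t (M \ L) ∪ I = M \ L ∪ insert t I := by
      simp [Finset.insert_union, Finset.union_insert]
    rw [hset, Finset.card_insert_of_notMem htI]
    ring
  have := Finset.sum_congr rfl key
  rw [Finset.sum_add_distrib] at this
  rw [Finset.sum_const_zero] at this; linarith
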